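/- For the linear acene graph L_n with n ≥ 3 fused hexagonal rings (the hydrogen-depleted molecular graph of the acene C_{4n+2}H_{2n+4}), the edge hyper-Zagreb index equals 4(85n − 62). -/

import Mathlib

open Finset SimpleGraph
open scoped Classical

/-- The edge degree of an edge `e = ab`: `d(a) + d(b) - 2`. -/
noncomputable def edgeDeg {V : Type*} [Fintype V] (G : SimpleGraph V) : Sym2 V → ℕ :=
  Sym2.lift ⟨fun a b => G.degree a + G.degree b - 2, fun a b => by simp [Nat.add_comm]⟩

/-- The unordered pairs of distinct adjacent edges (edges sharing a common endpoint). -/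
noncomputable def adjEdgePairs {V : Type*} [Fintype V] (G : SimpleGraph V) :
    Finset (Sym2 (Sym2 V)) :=
  G.edgeFinset.sym2.filter fun p => ¬ p.IsDiag ∧ ∃ v, ∀ e ∈ p, v ∈ e

/-- The edge hyper-Zagreb index: `EHM(G) = Σ_{e ~ f} (d(e) + d(f))²` over unordered pairs
of distinct adjacent edges. -/
noncomputable def EHM {V : Type*} [Fintype V] (G : SimpleGraph V) : ℕ :=
  ∑ p ∈ adjEdgePairs G,
    Sym2.lift ⟨fun e f => (edgeDeg G e + edgeDeg G f) ^ 2, fun e f => by simp [Nat.add_comm]⟩ p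

/-- The linear acene graph `L n`: `n` hexagons fused in a row, realized on two rows
`Fin 2 × Fin (2n+1)`; horizontal path edges in each row and vertical edges at even columns. -/
noncomputable def acene (n : ℕ) : SimpleGraph (Fin 2 × Fin (2 * n + 1)) :=
  SimpleGraph.fromRel fun p q =>
    (p.1 = q.1 ∧ (q.2 : ℕ) = (p.2 : ℕ) + 1) ∨ ((p.2 : ℕ) = (q.2 : ℕ) ∧ Even (p.2 : ℕ))

/-- For the linear acene graph `L_n` with `n ≥ 3` fused hexagonal rings (the
hydrogen-depleted molecular graph of `C_{4n+2}H_{2n+4}`), the edge hyper-Zagreb index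
equals `4(85n − 62)`. -/
noncomputable def W {V : Type*} [Fintype V] (G : SimpleGraph V) (v : V) : Sym2 V → ℕ :=
  Sym2.lift ⟨fun u1 u2 => (edgeDeg G s(v, u1) + edgeDeg G s(v, u2)) ^ 2,
    fun a b => by simp [Nat.add_comm]⟩

lemma EHM_eq_sum_vertices {V : Type*} [Fintype V] [DecidableEq V] (G : SimpleGraph V) :
    EHM G = ∑ v : V, ∑ q ∈ (G.neighborFinset v).sym2.filter (fun q => ¬ q.IsDiag), W G v q := by
  rw [Finset.sum_sigma']
  refine (Finset.sum_bij (fun a _ => Sym2.map (fun u => s(a.1, u)) a.2) ?_ ?_ ?_ ?_).symm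
  · rintro ⟨v, q⟩ hq
    simp only [Finset.mem_sigma, Finset.mem_filter, Finset.mem_univ, true_and] at hq
    obtain ⟨hq1, hq2⟩ := hq
    induction q using Sym2.ind with
    | _ u1 u2 =>
      simp only [Finset.mk_mem_sym2_iff, mem_neighborFinset] at hq1
      rw [Sym2.isDiag_iff_proj_eq] at hq2
      simp only [Sym2.map_pair_eq, adjEdgePairs, Finset.mem_filter, Finset.mk_mem_sym2_iff,
        mem_edgeFinset, mem_edgeSet]
      refine ⟨⟨hq1.1, hq1.2⟩, ?_, v, ?_⟩
      · rw [Sym2.isDiag_iff_proj_eq, Sym2.eq_iff]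
        rintro (⟨-, h⟩ | ⟨h1, h2⟩)
        · exact hq2 h
        · exact G.ne_of_adj hq1.2 h1
      · intro e he
        rw [Sym2.mem_iff] at he
        rcases he with rfl | rfl <;> simp
  · rintro ⟨v, q⟩ hq ⟨v', q'⟩ hq' heq
    simp only [Finset.mem_sigma, Finset.mem_filter, Finset.mem_univ, true_and] at hq hq'
    obtain ⟨hq1, hq2⟩ := hq
    obtain ⟨hq1', hq2'⟩ := hq'
    induction q using Sym2.ind with
    | _ u1 u2 =>
    induction q' using Sym2.ind with
    | _ u1' u2' =>
      simp only [Finset.mk_mem_sym2_iff, mem_neighborFinset] at hq1 hq1'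
      rw [Sym2.isDiag_iff_proj_eq] at hq2 hq2'
      have h1 : v ≠ u1 := G.ne_of_adj hq1.1
      have h2 : v ≠ u2 := G.ne_of_adj hq1.2
      have h1' : v' ≠ u1' := G.ne_of_adj hq1'.1
      have h2' : v' ≠ u2' := G.ne_of_adj hq1'.2
      simp only [Sym2.map_pair_eq, Sym2.eq_iff] at heq
      have : v = v' ∧ s(u1, u2) = s(u1', u2') := by
        rcases heq with ⟨h | h, h' | h'⟩ | ⟨h | h, h' | h'⟩ <;>
          obtain ⟨rfl, rfl⟩ := h <;> obtain ⟨e1, e2⟩ := h' <;>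
          first
          | exact ⟨rfl, by rw [Sym2.eq_iff]; tauto⟩
          | (exfalso; tauto)
      obtain ⟨rfl, h⟩ := this
      simp [h]
  · intro p hp
    simp only [adjEdgePairs, Finset.mem_filter] at hp
    obtain ⟨hp1, hp2, v, hv⟩ := hp
    induction p using Sym2.ind with
    | _ e f =>
      simp only [Finset.mk_mem_sym2_iff, mem_edgeFinset] at hp1
      have hve : v ∈ e := hv e (by simp)
      have hvf : v ∈ f := hv f (by simp)
      obtain ⟨u1, rfl⟩ := Sym2.mem_iff_exists.mp hve
      obtain ⟨u2, rfl⟩ := Sym2.mem_iff_exists.mp hvf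
      refine ⟨⟨v, s(u1, u2)⟩, ?_, ?_⟩
      · simp only [Finset.mem_sigma, Finset.mem_univ, Finset.mem_filter, true_and,
          Finset.mk_mem_sym2_iff, mem_neighborFinset]
        refine ⟨⟨hp1.1, hp1.2⟩, ?_⟩
        rw [Sym2.isDiag_iff_proj_eq]
        intro h
        rw [Sym2.isDiag_iff_proj_eq] at hp2
        exact hp2 (by rw [Sym2.eq_iff]; exact Or.inl ⟨rfl, h⟩)
      · simp [Sym2.map_pair_eq]
  · rintro ⟨v, q⟩ hq
    induction q using Sym2.ind with
    | _ u1 u2 => simp [Sym2.map_pair_eq, W]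
lemma acene_adj {n : ℕ} (p q : Fin 2 × Fin (2 * n + 1)) :
    (acene n).Adj p q ↔ p ≠ q ∧
      ((p.1 = q.1 ∧ ((q.2 : ℕ) = (p.2 : ℕ) + 1 ∨ (p.2 : ℕ) = (q.2 : ℕ) + 1)) ∨
        ((p.2 : ℕ) = (q.2 : ℕ) ∧ (p.2 : ℕ) % 2 = 0)) := by
  rw [acene, SimpleGraph.fromRel_adj]
  constructor
  · rintro ⟨hne, h | h⟩
    · refine ⟨hne, ?_⟩
      rcases h with ⟨h1, h2⟩ | ⟨h1, h2⟩
      · exact Or.inl ⟨h1, Or.inl h2⟩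
      · exact Or.inr ⟨h1, Nat.even_iff.mp h2⟩
    · refine ⟨hne, ?_⟩
      rcases h with ⟨h1, h2⟩ | ⟨h1, h2⟩
      · exact Or.inl ⟨h1.symm, Or.inr h2⟩
      · exact Or.inr ⟨h1.symm, by rw [Nat.even_iff] at h2; omega⟩
  · rintro ⟨hne, h⟩
    refine ⟨hne, ?_⟩
    rcases h with ⟨h1, h2 | h2⟩ | ⟨h1, h2⟩
    · exact Or.inl (Or.inl ⟨h1, h2⟩)
    · exact Or.inr (Or.inl ⟨h1.symm, h2⟩)
    · exact Or.inl (Or.inr ⟨h1, Nat.even_iff.mpr h2⟩)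

variable {n : ℕ}

lemma nbr_zero (hn : 1 ≤ n) (i : Fin 2) (j : Fin (2 * n + 1)) (hj : (j : ℕ) = 0) :
    (acene n).neighborFinset (i, j) =
      {(i, ⟨1, by omega⟩), (i + 1, j)} := by
  ext ⟨a, b⟩
  rw [mem_neighborFinset, acene_adj]
  fin_cases i <;> fin_cases a <;>
    simp [Prod.ext_iff, Fin.ext_iff, ne_eq] <;> omega

lemma nbr_last (hn : 1 ≤ n) (i : Fin 2) (j : Fin (2 * n + 1)) (hj : (j : ℕ) = 2 * n) :
    (acene n).neighborFinset (i, j) =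
      {(i, ⟨2 * n - 1, by omega⟩), (i + 1, j)} := by
  ext ⟨a, b⟩
  rw [mem_neighborFinset, acene_adj]
  fin_cases i <;> fin_cases a <;>
    simp [Prod.ext_iff, Fin.ext_iff, ne_eq] <;> omega

lemma nbr_odd (i : Fin 2) (j : Fin (2 * n + 1)) (hj : (j : ℕ) % 2 = 1) :
    (acene n).neighborFinset (i, j) =
      {(i, ⟨(j : ℕ) - 1, by omega⟩), (i, ⟨(j : ℕ) + 1, by omega⟩)} := by
  ext ⟨a, b⟩
  rw [mem_neighborFinset, acene_adj]
  fin_cases i <;> fin_cases a <;>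
    simp [Prod.ext_iff, Fin.ext_iff, ne_eq] <;> omega

lemma nbr_even_mid (i : Fin 2) (j : Fin (2 * n + 1)) (hj : (j : ℕ) % 2 = 0)
    (h0 : 0 < (j : ℕ)) (h1 : (j : ℕ) < 2 * n) :
    (acene n).neighborFinset (i, j) =
      {(i, ⟨(j : ℕ) - 1, by omega⟩), (i, ⟨(j : ℕ) + 1, by omega⟩), (i + 1, j)} := by
  ext ⟨a, b⟩
  rw [mem_neighborFinset, acene_adj]
  fin_cases i <;> fin_cases a <;>
    simp [Prod.ext_iff, Fin.ext_iff, ne_eq] <;> omega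

lemma deg_acene (hn : 1 ≤ n) (i : Fin 2) (j : Fin (2 * n + 1)) :
    (acene n).degree (i, j) =
      if (j : ℕ) % 2 = 0 ∧ 0 < (j : ℕ) ∧ (j : ℕ) < 2 * n then 3 else 2 := by
  rw [← card_neighborFinset_eq_degree]
  rcases Nat.lt_or_ge 0 (j : ℕ) with h0 | h0
  · rcases Nat.lt_or_ge (j : ℕ) (2 * n) with h1 | h1
    · rcases Nat.even_or_odd (j : ℕ) with he | he
      · rw [Nat.even_iff] at he
        rw [nbr_even_mid i j he h0 h1, if_pos ⟨he, h0, h1⟩]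
        rw [Finset.card_insert_of_notMem, Finset.card_insert_of_notMem,
          Finset.card_singleton] <;>
          simp [Prod.ext_iff, Fin.ext_iff] <;> omega
      · rw [Nat.odd_iff] at he
        rw [nbr_odd i j he, if_neg (by omega)]
        rw [Finset.card_insert_of_notMem, Finset.card_singleton]
        simp [Prod.ext_iff, Fin.ext_iff]
        all_goals omega
    · have hj : (j : ℕ) = 2 * n := by have := j.isLt; omega
      rw [nbr_last hn i j hj, if_neg (by omega)]
      rw [Finset.card_insert_of_notMem, Finset.card_singleton]
      simp [Prod.ext_iff, Fin.ext_iff]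
      all_goals omega
  · have hj : (j : ℕ) = 0 := by omega
    rw [nbr_zero hn i j hj, if_neg (by omega)]
    rw [Finset.card_insert_of_notMem, Finset.card_singleton]
    simp [Prod.ext_iff, Fin.ext_iff]
    all_goals omega

lemma sum_pairs_two {α : Type*} [DecidableEq α] (a b : α) (hab : a ≠ b) (f : Sym2 α → ℕ) :
    ∑ q ∈ ({a, b} : Finset α).sym2.filter (fun q => ¬ q.IsDiag), f q = f s(a, b) := by
  have h : ({a, b} : Finset α).sym2.filter (fun q => ¬ q.IsDiag) = {s(a, b)} := by
    ext q
    induction q using Sym2.ind with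
    | _ x y =>
      simp only [Finset.mem_filter, Finset.mk_mem_sym2_iff, Finset.mem_insert,
        Finset.mem_singleton, Sym2.isDiag_iff_proj_eq, Sym2.eq_iff]
      constructor
      · rintro ⟨⟨hx | hx, hy | hy⟩, hne⟩ <;> subst hx <;> subst hy <;> tauto
      · rintro (⟨rfl, rfl⟩ | ⟨rfl, rfl⟩)
        · exact ⟨⟨Or.inl rfl, Or.inr rfl⟩, hab⟩
        · exact ⟨⟨Or.inr rfl, Or.inl rfl⟩, fun h => hab h.symm⟩
  rw [h, Finset.sum_singleton]

lemma sum_pairs_three {α : Type*} [DecidableEq α] (a b c : α) (hab : a ≠ b) (hac : a ≠ c)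
    (hbc : b ≠ c) (f : Sym2 α → ℕ) :
    ∑ q ∈ ({a, b, c} : Finset α).sym2.filter (fun q => ¬ q.IsDiag), f q =
      f s(a, b) + f s(a, c) + f s(b, c) := by
  have h : ({a, b, c} : Finset α).sym2.filter (fun q => ¬ q.IsDiag) =
      {s(a, b), s(a, c), s(b, c)} := by
    ext q
    induction q using Sym2.ind with
    | _ x y =>
      simp only [Finset.mem_filter, Finset.mk_mem_sym2_iff, Finset.mem_insert,
        Finset.mem_singleton, Sym2.isDiag_iff_proj_eq, Sym2.eq_iff]
      constructor
      · rintro ⟨⟨hx | hx | hx, hy | hy | hy⟩, hne⟩ <;> subst hx <;> subst hy <;> tauto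
      · rintro ((⟨rfl, rfl⟩ | ⟨rfl, rfl⟩) | (⟨rfl, rfl⟩ | ⟨rfl, rfl⟩) |
          (⟨rfl, rfl⟩ | ⟨rfl, rfl⟩)) <;>
          exact ⟨by tauto, by first
            | exact hab | exact fun h => hab h.symm
            | exact hac | exact fun h => hac h.symm
            | exact hbc | exact fun h => hbc h.symm⟩
  have hba := hab.symm
  have hca := hac.symm
  have hcb := hbc.symm
  have h1 : s(a, b) ∉ ({s(a, c), s(b, c)} : Finset (Sym2 α)) := by
    simp only [Finset.mem_insert, Finset.mem_singleton, Sym2.eq_iff]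
    tauto
  have h2 : s(a, c) ∉ ({s(b, c)} : Finset (Sym2 α)) := by
    simp only [Finset.mem_singleton, Sym2.eq_iff]
    tauto
  rw [h, Finset.sum_insert h1, Finset.sum_insert h2, Finset.sum_singleton]
  omega

def g (n j : ℕ) : ℕ :=
  if j = 0 ∨ j = 2 * n then 16
  else if j % 2 = 1 then (if j = 1 ∨ j = 2 * n - 1 then 25 else 36)
  else 134

lemma col_sum (hn : 3 ≤ n) (i : Fin 2) (j : Fin (2 * n + 1)) :
    ∑ q ∈ (((acene n).neighborFinset (i, j)).sym2.filter (fun q => ¬ q.IsDiag)),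
      W (acene n) (i, j) q = g n (j : ℕ) := by
  have hn1 : 1 ≤ n := by omega
  have hii : i ≠ i + 1 := by fin_cases i <;> decide
  rcases Nat.lt_or_ge 0 (j : ℕ) with h0 | h0
  · rcases Nat.lt_or_ge (j : ℕ) (2 * n) with h1 | h1
    · rcases Nat.even_or_odd (j : ℕ) with he | he
      · rw [Nat.even_iff] at he
        rw [nbr_even_mid i j he h0 h1,
          sum_pairs_three _ _ _ (by intro h; have h2 := congrArg (fun p => ((p.2 : Fin (2*n+1)) : ℕ)) h; simp at h2; all_goals omega)
            (by intro h; have h2 := congrArg (fun p => ((p.2 : Fin (2*n+1)) : ℕ)) h; simp at h2; all_goals omega) (by intro h; have h2 := congrArg (fun p => ((p.2 : Fin (2*n+1)) : ℕ)) h; simp at h2; all_goals omega)]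
        simp only [W, Sym2.lift_mk, edgeDeg, deg_acene hn1, g]
        (try norm_num); split_ifs <;> first | omega | (simp only [Fin.ext_iff, Fin.lt_iff_val_lt_val, Fin.val_zero] at * <;> omega) | (norm_num; try omega) | (simp_all; try omega)
      · rw [Nat.odd_iff] at he
        rw [nbr_odd i j he,
          sum_pairs_two _ _ (by intro h; have h2 := congrArg (fun p => ((p.2 : Fin (2*n+1)) : ℕ)) h; simp at h2; all_goals omega)]
        simp only [W, Sym2.lift_mk, edgeDeg, deg_acene hn1, g]
        (try norm_num); split_ifs <;> first | omega | (simp only [Fin.ext_iff, Fin.lt_iff_val_lt_val, Fin.val_zero] at * <;> omega) | (norm_num; try omega) | (simp_all; try omega)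
    · have hj : (j : ℕ) = 2 * n := by have := j.isLt; omega
      rw [nbr_last hn1 i j hj,
        sum_pairs_two _ _ (by intro h; have h2 := congrArg (fun p => ((p.2 : Fin (2*n+1)) : ℕ)) h; simp at h2; all_goals omega)]
      simp only [W, Sym2.lift_mk, edgeDeg, deg_acene hn1, g]
      (try norm_num); split_ifs <;> first | omega | (simp only [Fin.ext_iff, Fin.lt_iff_val_lt_val, Fin.val_zero] at * <;> omega) | (norm_num; try omega) | (simp_all; try omega)
  · have hj : (j : ℕ) = 0 := by omega
    have hne : ((i, ⟨1, by omega⟩) : Fin 2 × Fin (2*n+1)) ≠ (i + 1, j) := by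
      intro h
      have h2 := congrArg (fun p => ((p.2 : Fin (2*n+1)) : ℕ)) h
      simp at h2
      all_goals omega
    rw [nbr_zero hn1 i j hj, sum_pairs_two _ _ hne]
    simp only [W, Sym2.lift_mk, edgeDeg, deg_acene hn1, g]
    (try norm_num); split_ifs <;> first | omega | (simp only [Fin.ext_iff, Fin.lt_iff_val_lt_val, Fin.val_zero] at * <;> omega) | (norm_num; try omega) | (simp_all; try omega)

lemma sum_g (n : ℕ) (hn : 3 ≤ n) : ∑ j ∈ Finset.range (2 * n + 1), g n j = 170 * n - 124 := by
  induction n with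
  | zero => omega
  | succ m ih =>
    rcases Nat.lt_or_ge m 3 with hm | hm
    · have hm2 : m = 2 := by omega
      subst hm2
      decide
    · have ihm := ih hm
      have e1 : ∑ j ∈ Finset.range (2 * m + 3), g (m + 1) j =
          ∑ j ∈ Finset.range (2 * m + 1), g (m + 1) j + g (m + 1) (2 * m + 1) +
            g (m + 1) (2 * m + 2) := by
        rw [show 2 * m + 3 = (2 * m + 1) + 1 + 1 from by omega, Finset.sum_range_succ,
          Finset.sum_range_succ]
      have e2 : ∑ j ∈ Finset.range (2 * m + 1), g (m + 1) j =
          ∑ j ∈ Finset.range (2 * m - 1), g (m + 1) j + g (m + 1) (2 * m - 1) +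
            g (m + 1) (2 * m) := by
        rw [show 2 * m + 1 = (2 * m - 1) + 1 + 1 from by omega, Finset.sum_range_succ,
          Finset.sum_range_succ, show 2 * m - 1 + 1 = 2 * m from by omega]
      have e3 : ∑ j ∈ Finset.range (2 * m - 1), g (m + 1) j =
          ∑ j ∈ Finset.range (2 * m - 1), g m j := by
        refine Finset.sum_congr rfl fun j hj => ?_
        rw [Finset.mem_range] at hj
        simp only [g]
        split_ifs <;> first | omega | tauto
      have e4 : ∑ j ∈ Finset.range (2 * m + 1), g m j =
          ∑ j ∈ Finset.range (2 * m - 1), g m j + g m (2 * m - 1) + g m (2 * m) := by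
        rw [show 2 * m + 1 = (2 * m - 1) + 1 + 1 from by omega, Finset.sum_range_succ,
          Finset.sum_range_succ, show 2 * m - 1 + 1 = 2 * m from by omega]
      have v1 : g m (2 * m - 1) = 25 := by simp only [g]; split_ifs <;> first | omega | tauto
      have v2 : g m (2 * m) = 16 := by simp only [g]; split_ifs <;> first | omega | tauto
      have v3 : g (m + 1) (2 * m - 1) = 36 := by simp only [g]; split_ifs <;> first | omega | tauto
      have v4 : g (m + 1) (2 * m) = 134 := by simp only [g]; split_ifs <;> first | omega | tauto
      have v5 : g (m + 1) (2 * m + 1) = 25 := by simp only [g]; split_ifs <;> first | omega | tauto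
      have v6 : g (m + 1) (2 * m + 2) = 16 := by simp only [g]; split_ifs <;> first | omega | tauto
      have : 2 * (m + 1) + 1 = 2 * m + 3 := by omega
      rw [this]
      omega

set_option maxHeartbeats 1000000 in
theorem EHM_acene (n : ℕ) (hn : 3 ≤ n) : EHM (acene n) = 4 * (85 * n - 62) := by
  rw [EHM_eq_sum_vertices, Fintype.sum_prod_type]
  refine Eq.trans (Finset.sum_congr rfl fun i _ => Finset.sum_congr rfl fun j _ =>
    col_sum hn i j) ?_
  rw [Finset.sum_const, Finset.card_univ, Fintype.card_fin,
    Fin.sum_univ_eq_sum_range (g n) (2 * n + 1), sum_g n hn, smul_eq_mul]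
  omega
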